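/- Let T be a tree with k edges and let V(T) = X ⊔ Y be its bipartition. For every integer r with 0 ≤ r ≤ k there exists a set U ⊆ V(T) with U ⊆ X or U ⊆ Y such that exactly r edges of T are incident to a vertex of U. -/

import Mathlib

open Finset

private lemma tonal_complete_of {γ : Type*} [DecidableEq γ] (f : γ → ℕ) :
    ∀ (n : ℕ) (s : Finset γ), s.card = n →
      (∀ v ∈ s, f v ≤ 1 + ∑ u ∈ (s.erase v).filter (fun u => f u < f v), f u) →
      ∀ r, r ≤ ∑ u ∈ s, f u → ∃ t ⊆ s, ∑ u ∈ t, f u = r := by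
  intro n
  induction n with
  | zero =>
    intro s hs H r hr
    rw [Finset.card_eq_zero] at hs; subst hs
    simp only [Finset.sum_empty, Nat.le_zero] at hr
    exact ⟨∅, Finset.Subset.refl _, by simp [hr]⟩
  | succ n ih =>
    intro s hs H r hr
    have hne : s.Nonempty := by rw [← Finset.card_pos, hs]; omega
    obtain ⟨v, hv, hvmax⟩ := s.exists_max_image f hne
    have hcard' : (s.erase v).card = n := by
      rw [Finset.card_erase_of_mem hv, hs]; omega
    have H' : ∀ u ∈ s.erase v,
        f u ≤ 1 + ∑ w ∈ ((s.erase v).erase u).filter (fun w => f w < f u), f w := by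
      intro u hu
      have hus : u ∈ s := Finset.mem_of_mem_erase hu
      have hset : ((s.erase v).erase u).filter (fun w => f w < f u)
          = (s.erase u).filter (fun w => f w < f u) := by
        ext w
        simp only [Finset.mem_filter, Finset.mem_erase]
        constructor
        · rintro ⟨⟨hwu, _, hws⟩, h⟩; exact ⟨⟨hwu, hws⟩, h⟩
        · rintro ⟨⟨hwu, hws⟩, h⟩
          refine ⟨⟨hwu, ?_, hws⟩, h⟩
          rintro rfl
          exact absurd (hvmax u hus) (by omega)
      rw [hset]
      exact H u hus
    have hsum : ∑ u ∈ s, f u = f v + ∑ u ∈ s.erase v, f u :=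
      (Finset.add_sum_erase s f hv).symm
    by_cases hle : r ≤ ∑ u ∈ s.erase v, f u
    · obtain ⟨t, hts, ht⟩ := ih (s.erase v) hcard' H' r hle
      exact ⟨t, hts.trans (Finset.erase_subset _ _), ht⟩
    · push_neg at hle
      have hfv : f v ≤ r := by
        have h1 := H v hv
        have h2 : ∑ u ∈ (s.erase v).filter (fun u => f u < f v), f u
            ≤ ∑ u ∈ s.erase v, f u :=
          Finset.sum_le_sum_of_subset (Finset.filter_subset _ _)
        omega
      obtain ⟨t, hts, ht⟩ := ih (s.erase v) hcard' H' (r - f v) (by omega)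
      have hvt : v ∉ t := fun h => (Finset.mem_erase.mp (hts h)).1 rfl
      refine ⟨insert v t, ?_, ?_⟩
      · exact Finset.insert_subset hv (hts.trans (Finset.erase_subset _ _))
      · rw [Finset.sum_insert hvt, ht]; omega

private lemma tonal_cond_of_card {γ : Type*} [DecidableEq γ] (f : γ → ℕ) (s : Finset γ)
    (h1 : ∀ v ∈ s, 1 ≤ f v) (hc : ∑ u ∈ s, f u + 1 ≤ 2 * s.card) :
    ∀ v ∈ s, f v ≤ 1 + ∑ u ∈ (s.erase v).filter (fun u => f u < f v), f u := by
  intro v hv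
  by_cases hfv : f v = 1
  · omega
  · have h2v : 2 ≤ f v := by have := h1 v hv; omega
    set s1 := s.filter (fun u => f u = 1) with hs1
    set s2 := s.filter (fun u => ¬ f u = 1) with hs2
    have hsplit_card : s1.card + s2.card = s.card :=
      Finset.card_filter_add_card_filter_not _
    have hsplit_sum : ∑ u ∈ s1, f u + ∑ u ∈ s2, f u = ∑ u ∈ s, f u :=
      Finset.sum_filter_add_sum_filter_not s _ f
    have hs1sum : ∑ u ∈ s1, f u = s1.card := by
      rw [Finset.sum_congr rfl (fun u hu => (Finset.mem_filter.mp hu).2)]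
      simp [hs1]
    have hvs2 : v ∈ s2 := Finset.mem_filter.mpr ⟨hv, hfv⟩
    have hs2card : 1 ≤ s2.card := Finset.card_pos.mpr ⟨v, hvs2⟩
    have hs2sum : f v + 2 * (s2.card - 1) ≤ ∑ u ∈ s2, f u := by
      have hre : f v + ∑ u ∈ s2.erase v, f u = ∑ u ∈ s2, f u :=
        Finset.add_sum_erase s2 f hvs2
      have h2all : ∀ u ∈ s2.erase v, 2 ≤ f u := by
        intro u hu
        have hus := Finset.mem_of_mem_erase hu
        have := h1 u ((Finset.filter_subset _ _) hus)
        have := (Finset.mem_filter.mp hus).2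
        omega
      have hns : (s2.erase v).card * 2 ≤ ∑ u ∈ s2.erase v, f u := by
        simpa [smul_eq_mul] using Finset.card_nsmul_le_sum (s2.erase v) f 2 h2all
      have hce : (s2.erase v).card = s2.card - 1 := Finset.card_erase_of_mem hvs2
      omega
    have hfvle : f v ≤ s1.card + 1 := by omega
    have hsub : s1 ⊆ (s.erase v).filter (fun u => f u < f v) := by
      intro u hu
      obtain ⟨hus, hu1⟩ := Finset.mem_filter.mp hu
      refine Finset.mem_filter.mpr ⟨Finset.mem_erase.mpr ⟨?_, hus⟩, by omega⟩
      rintro rfl; omega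
    have hle2 : s1.card ≤ ∑ u ∈ (s.erase v).filter (fun u => f u < f v), f u := by
      calc s1.card = ∑ u ∈ s1, f u := hs1sum.symm
        _ ≤ _ := Finset.sum_le_sum_of_subset hsub
    omega

private lemma tonal_aux {γ : Type*} [Fintype γ] [DecidableEq γ] (T : SimpleGraph γ)
    [DecidableRel T.Adj] (Z : Finset γ)
    (hZ : ∀ a b, T.Adj a b → (a ∈ Z ↔ b ∉ Z))
    (hdeg : ∀ v ∈ Z, 1 ≤ T.degree v)
    (hcard : T.edgeFinset.card + 1 ≤ 2 * Z.card)
    (r : ℕ) (hr : r ≤ T.edgeFinset.card) :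
    ∃ u : Finset γ, u ⊆ Z ∧ (u.biUnion (fun v => T.incidenceFinset v)).card = r := by
  have hdisj : ∀ v ∈ Z, ∀ w ∈ Z, v ≠ w →
      Disjoint (T.incidenceFinset v) (T.incidenceFinset w) := by
    intro v hv w hw hvw
    rw [Finset.disjoint_left]
    intro e hev hew
    rw [SimpleGraph.mem_incidenceFinset] at hev hew
    have he : e = s(v, w) := (Sym2.mem_and_mem_iff hvw).mp ⟨hev.2, hew.2⟩
    have hadj : T.Adj v w := by
      have := hev.1
      rw [he, SimpleGraph.mem_edgeSet] at this
      exact this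
    exact ((hZ v w hadj).mp hv) hw
  have hunion : Z.biUnion (fun v => T.incidenceFinset v) = T.edgeFinset := by
    ext e
    simp only [Finset.mem_biUnion, SimpleGraph.mem_incidenceFinset,
      SimpleGraph.mem_edgeFinset]
    constructor
    · rintro ⟨v, _, he, _⟩; exact he
    · intro he
      induction e with
      | h a b =>
        have hadj : T.Adj a b := he
        by_cases ha : a ∈ Z
        · exact ⟨a, ha, he, Sym2.mem_mk_left a b⟩
        · have hb : b ∈ Z := by
            by_contra hb
            exact ha ((hZ a b hadj).mpr hb)
          exact ⟨b, hb, he, Sym2.mem_mk_right a b⟩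
  have hk : ∑ v ∈ Z, T.degree v = T.edgeFinset.card := by
    rw [← hunion, Finset.card_biUnion hdisj]
    exact Finset.sum_congr rfl fun v _ =>
      (SimpleGraph.card_incidenceFinset_eq_degree T v).symm
  have hc1 : ∑ u ∈ Z, T.degree u + 1 ≤ 2 * Z.card := by rw [hk]; omega
  have hc2 : r ≤ ∑ u ∈ Z, T.degree u := by rw [hk]; omega
  obtain ⟨t, htZ, ht⟩ := tonal_complete_of (fun v => T.degree v) Z.card Z rfl
    (tonal_cond_of_card (fun v => T.degree v) Z hdeg hc1) r hc2
  refine ⟨t, htZ, ?_⟩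
  rw [Finset.card_biUnion (fun v hv w hw => hdisj v (htZ hv) w (htZ hw))]
  rw [← ht]
  exact Finset.sum_congr rfl fun v _ =>
    SimpleGraph.card_incidenceFinset_eq_degree T v

theorem tree_tonal_sets {γ : Type*} [Fintype γ] (T : SimpleGraph γ) (hT : T.IsTree)
    (k : ℕ) (hk : T.edgeSet.ncard = k) (X Y : Set γ)
    (hdisj : Disjoint X Y) (hcover : X ∪ Y = Set.univ)
    (hbip : ∀ a b, T.Adj a b → (a ∈ X ∧ b ∈ Y) ∨ (a ∈ Y ∧ b ∈ X)) :
    ∀ r : ℕ, r ≤ k → ∃ U : Set γ, (U ⊆ X ∨ U ⊆ Y) ∧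
      {e ∈ T.edgeSet | ∃ v ∈ U, v ∈ e}.ncard = r := by
  classical
  intro r hr
  rcases Nat.eq_zero_or_pos r with hr0 | hrpos
  · refine ⟨∅, Or.inl (Set.empty_subset _), ?_⟩
    have hempty : {e ∈ T.edgeSet | ∃ v ∈ (∅ : Set γ), v ∈ e} = ∅ := by
      ext e; simp
    rw [hempty, hr0, Set.ncard_empty]
  · have hk1 : 1 ≤ k := le_trans hrpos hr
    have hEcard : T.edgeFinset.card = k := by
      rw [← hk]
      exact (Set.ncard_eq_toFinset_card' _).symm
    have hVcard : Fintype.card γ = k + 1 := by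
      have := hT.card_edgeFinset
      omega
    have hYX : ∀ v, v ∈ Y ↔ v ∉ X := by
      intro v
      constructor
      · intro hv hx
        exact Set.disjoint_left.mp hdisj hx hv
      · intro hv
        have : v ∈ X ∪ Y := hcover ▸ Set.mem_univ v
        rcases this with h | h
        · exact absurd h hv
        · exact h
    set sX := Finset.univ.filter (· ∈ X) with hsX
    set sY := Finset.univ.filter (· ∈ Y) with hsY
    have hmemX : ∀ v, v ∈ sX ↔ v ∈ X := by intro v; simp [hsX]
    have hmemY : ∀ v, v ∈ sY ↔ v ∈ Y := by intro v; simp [hsY]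
    have hXY : sX.card + sY.card = k + 1 := by
      rw [← hVcard, ← Finset.card_univ]
      rw [← Finset.card_filter_add_card_filter_not (s := Finset.univ)
        (p := (· ∈ X))]
      have hsYX : sY = Finset.univ.filter (fun v => ¬ v ∈ X) := by
        ext v
        simp only [hsY, Finset.mem_filter, Finset.mem_univ, true_and]
        exact hYX v
      rw [hsYX]
    have hdegall : ∀ v : γ, 1 ≤ T.degree v := by
      intro v
      have h2 : 1 < Fintype.card γ := by omega
      obtain ⟨w, hw⟩ := Fintype.exists_ne_of_one_lt_card h2 v
      obtain ⟨p⟩ := hT.isConnected.preconnected v w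
      cases p with
      | nil => exact absurd rfl hw
      | cons h q => exact (T.degree_pos_iff_exists_adj v).mpr ⟨_, h⟩
    have hbX : ∀ a b, T.Adj a b → (a ∈ sX ↔ b ∉ sX) := by
      intro a b hab
      rw [hmemX, hmemX]
      rcases hbip a b hab with ⟨ha, hb⟩ | ⟨ha, hb⟩
      · exact ⟨fun _ => (hYX b).mp hb, fun _ => ha⟩
      · exact ⟨fun haX => absurd haX ((hYX a).mp ha),
          fun hbX => absurd ((hYX b).mpr hbX) (fun h => (hYX b).mp h hb)⟩
    have hbY : ∀ a b, T.Adj a b → (a ∈ sY ↔ b ∉ sY) := by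
      intro a b hab
      rw [hmemY, hmemY]
      rcases hbip a b hab with ⟨ha, hb⟩ | ⟨ha, hb⟩
      · constructor
        · intro haY
          exact absurd ha ((hYX a).mp haY)
        · intro hbY
          exact absurd hb hbY
      · exact ⟨fun _ => fun hbY => (hYX b).mp hbY hb, fun _ => ha⟩
    have hconv : ∀ u : Finset γ,
        {e ∈ T.edgeSet | ∃ v ∈ (↑u : Set γ), v ∈ e}
          = ↑(u.biUnion (fun v => T.incidenceFinset v)) := by
      intro u
      ext e
      simp only [Set.mem_setOf_eq, Finset.coe_biUnion, Set.mem_iUnion,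
        Finset.mem_coe, SimpleGraph.mem_incidenceFinset, Finset.mem_coe,
        SimpleGraph.incidenceSet, Set.mem_setOf_eq]
      tauto
    rcases le_total sX.card sY.card with hle | hle
    · obtain ⟨u, huZ, hu⟩ := tonal_aux T sY hbY (fun v _ => hdegall v)
        (by omega) r (by omega)
      refine ⟨↑u, Or.inr fun v hv => (hmemY v).mp (huZ (Finset.mem_coe.mp hv)), ?_⟩
      rw [hconv u, Set.ncard_coe_finset]
      exact hu
    · obtain ⟨u, huZ, hu⟩ := tonal_aux T sX hbX (fun v _ => hdegall v)
        (by omega) r (by omega)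
      refine ⟨↑u, Or.inl fun v hv => (hmemX v).mp (huZ (Finset.mem_coe.mp hv)), ?_⟩
      rw [hconv u, Set.ncard_coe_finset]
      exact hu
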